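/- With C = UUᵀ, J = ZZᵀ, I + UᵀJU invertible, and Ξ₁₁ invertible satisfying Ξ₁₁Ξ₁₁ᵀ = UᵀJU + I, the matrix A_j (I + CJ)⁻¹ C A_jᵀ equals (A_j U Ξ₁₁⁻ᵀ)(A_j U Ξ₁₁⁻ᵀ)ᵀ for any matrix A_j ∈ ℝ^{n×n}; in particular it is positive semidefinite. -/

import Mathlib

open Matrix

theorem sandwich_factorization (n : ℕ)
    (Aj U Z C J Ξ₁₁ : Matrix (Fin n) (Fin n) ℝ)
    (hC : C = U * Uᵀ) (hJ : J = Z * Zᵀ)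
    (hinv : IsUnit (1 + Uᵀ * J * U))
    (h11 : Ξ₁₁ * Ξ₁₁ᵀ = Uᵀ * J * U + 1)
    (hXi : IsUnit Ξ₁₁) :
    Aj * (1 + C * J)⁻¹ * C * Ajᵀ =
        (Aj * U * (Ξ₁₁⁻¹)ᵀ) * (Aj * U * (Ξ₁₁⁻¹)ᵀ)ᵀ ∧
      (Aj * (1 + C * J)⁻¹ * C * Ajᵀ).PosSemidef := by
  have hS : IsUnit (Uᵀ * J * U + 1) := by rwa [add_comm] at hinv
  have hSdet : IsUnit (Uᵀ * J * U + 1).det := (isUnit_iff_isUnit_det _).mp hS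
  have hu : IsUnit (1 + C * J) := by
    rw [isUnit_iff_isUnit_det, hC, mul_assoc, Matrix.det_one_add_mul_comm,
      ← isUnit_iff_isUnit_det]
    rwa [add_comm] at hS
  have hpush : (1 + C * J) * U = U * (Uᵀ * J * U + 1) := by
    rw [hC]; noncomm_ring
  have h1 : (1 + C * J)⁻¹ * ((1 + C * J) * U) * (Uᵀ * J * U + 1)⁻¹
      = U * (Uᵀ * J * U + 1)⁻¹ := by
    rw [← mul_assoc, Matrix.nonsing_inv_mul _ ((isUnit_iff_isUnit_det _).mp hu), one_mul]
  rw [hpush] at h1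
  rw [mul_assoc, mul_assoc, Matrix.mul_nonsing_inv _ hSdet, mul_one] at h1
  have key : (1 + C * J)⁻¹ * C = U * (Uᵀ * J * U + 1)⁻¹ * Uᵀ := by
    nth_rewrite 2 [hC]
    rw [← mul_assoc, h1]
  have hXit : (Ξ₁₁⁻¹)ᵀ * (Ξ₁₁⁻¹) = (Uᵀ * J * U + 1)⁻¹ := by
    rw [← h11, Matrix.mul_inv_rev, Matrix.transpose_nonsing_inv]
  have heq : Aj * (1 + C * J)⁻¹ * C * Ajᵀ =
      (Aj * U * (Ξ₁₁⁻¹)ᵀ) * (Aj * U * (Ξ₁₁⁻¹)ᵀ)ᵀ := by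
    rw [mul_assoc Aj, key, ← hXit]
    simp only [Matrix.transpose_mul, Matrix.transpose_transpose]
    noncomm_ring
  refine ⟨heq, ?_⟩
  rw [heq]
  have := Matrix.posSemidef_self_mul_conjTranspose (Aj * U * (Ξ₁₁⁻¹)ᵀ)
  simpa [Matrix.conjTranspose, Matrix.transpose, Matrix.map, starRingEnd_apply, star_trivial] using this
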